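/- Suppose a Markov jump process on a finite state space E has generator G^D = r_D Ψ + Γ + R_D where r_D → ∞, ⟨R_D⟩ → 0, and every state in a subset Π ⊆ E is absorbing for the dynamics generated by Ψ, while from every state outside Π the Ψ-jump rate is strictly positive. Then the first hitting time σ₁^D of Π by the process started at any ζ ∈ E converges to 0 in probability as D → ∞. -/

import Mathlib

open Filter Matrix


lemma pow_entry_bound {E : Type*} [Fintype E] [DecidableEq E] (B : Matrix E E ℝ) :
    ∃ M : ℝ, 0 ≤ M ∧ ∀ (n : ℕ) (i j : E), |(B ^ n) i j| ≤ M ^ n := by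
  set m : ℝ := (∑ i, ∑ j, |B i j|) + 1 with hm
  have hm1 : 1 ≤ m := by
    have : (0:ℝ) ≤ ∑ i, ∑ j, |B i j| :=
      Finset.sum_nonneg fun i _ => Finset.sum_nonneg fun j _ => abs_nonneg _
    linarith
  have hmB : ∀ i j, |B i j| ≤ m := by
    intro i j
    have h1 : |B i j| ≤ ∑ i, ∑ j, |B i j| := by
      calc |B i j| ≤ ∑ j, |B i j| :=
            Finset.single_le_sum (f := fun j => |B i j|) (fun k _ => abs_nonneg _)
              (Finset.mem_univ j)
        _ ≤ ∑ i, ∑ j, |B i j| :=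
            Finset.single_le_sum (f := fun i => ∑ j, |B i j|)
              (fun k _ => Finset.sum_nonneg fun j _ => abs_nonneg _) (Finset.mem_univ i)
    linarith
  refine ⟨(Fintype.card E : ℝ) * m, by positivity, ?_⟩
  intro n
  induction n with
  | zero =>
    intro i j
    simp only [pow_zero, Matrix.one_apply]
    split <;> simp
  | succ n ih =>
    intro i j
    have : (B ^ (n+1)) i j = ∑ k, (B ^ n) i k * B k j := by
      rw [pow_succ]; rfl
    rw [this, pow_succ]
    calc |∑ k, (B ^ n) i k * B k j| ≤ ∑ k, |(B ^ n) i k * B k j| := Finset.abs_sum_le_sum_abs _ _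
      _ ≤ ∑ _k : E, ((Fintype.card E : ℝ) * m) ^ n * m := by
          refine Finset.sum_le_sum fun k _ => ?_
          rw [abs_mul]
          exact mul_le_mul (ih i k) (hmB k j) (abs_nonneg _)
            (pow_nonneg (by positivity) n)
      _ = (Fintype.card E : ℝ) * (((Fintype.card E : ℝ) * m) ^ n * m) := by
          rw [Finset.sum_const, Finset.card_univ, nsmul_eq_mul]
      _ ≤ ((Fintype.card E : ℝ) * m) ^ n * ((Fintype.card E : ℝ) * m) := by ring_nf; nlinarith [pow_nonneg (mul_nonneg (Nat.cast_nonneg (Fintype.card E)) (by linarith : (0:ℝ) ≤ m)) n]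

lemma exp_entry_summable {E : Type*} [Fintype E] [DecidableEq E] (B : Matrix E E ℝ) (i j : E) :
    Summable fun n : ℕ => ((n.factorial : ℝ)⁻¹ * (B ^ n) i j) := by
  obtain ⟨M, hM0, hM⟩ := pow_entry_bound B
  apply Summable.of_abs
  refine Summable.of_nonneg_of_le (fun n => abs_nonneg _) (fun n => ?_)
    (Real.summable_pow_div_factorial M)
  rw [abs_mul, abs_inv, Nat.abs_cast, div_eq_inv_mul]
  exact mul_le_mul_of_nonneg_left (hM n i j) (by positivity)

lemma exp_entry {E : Type*} [Fintype E] [DecidableEq E] (B : Matrix E E ℝ) (i j : E) :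
    NormedSpace.exp B i j = ∑' n : ℕ, ((n.factorial : ℝ)⁻¹ * (B ^ n) i j) := by
  have h : HasSum (fun n : ℕ => ((n.factorial : ℝ)⁻¹ : ℝ) • B ^ n)
      (Matrix.of fun i j => ∑' n : ℕ, ((n.factorial : ℝ)⁻¹ * (B ^ n) i j)) := by
    refine Pi.hasSum.mpr ?_
    intro a
    refine Pi.hasSum.mpr ?_
    intro b
    simpa [Matrix.smul_apply, smul_eq_mul] using (exp_entry_summable B a b).hasSum
  rw [NormedSpace.exp_eq_tsum ℝ]
  exact congrFun (congrFun h.tsum_eq i) j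

lemma core_bound {E : Type*} [Fintype E] [DecidableEq E] [Nonempty E]
    (G : Matrix E E ℝ) (u w : E → ℝ) (W : ℝ)
    (hu0 : ∀ η, 0 ≤ u η) (huw : ∀ η, u η ≤ w η) (hw0 : ∀ η, 0 ≤ w η)
    (hwW : ∀ η, w η ≤ W)
    (hoff : ∀ η η', η ≠ η' → 0 ≤ G η η')
    (lam : ℝ) (hGw : ∀ η, (G *ᵥ w) η ≤ -lam * w η)
    (s : ℝ) (hs : 0 < s) (ζ : E) :
    0 ≤ ∑ η', NormedSpace.exp (s • G) ζ η' * u η' ∧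
    ∑ η', NormedSpace.exp (s • G) ζ η' * u η' ≤ Real.exp (-(s * lam)) * W := by
  classical
  set μ : ℝ := max (Finset.univ.sup' Finset.univ_nonempty fun η => -(G η η)) lam with hμ
  have hμd : ∀ η, -(G η η) ≤ μ := fun η =>
    le_max_of_le_left (Finset.le_sup' (f := fun η => -(G η η)) (Finset.mem_univ η))
  have hμl : lam ≤ μ := le_max_right _ _
  set B : Matrix E E ℝ := s • G + (s * μ) • (1 : Matrix E E ℝ) with hB
  have hB0 : ∀ i j, 0 ≤ B i j := by
    intro i j
    by_cases hij : i = j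
    · subst hij
      simp only [hB, Matrix.add_apply, Matrix.smul_apply, Matrix.one_apply_eq, smul_eq_mul,
        mul_one]
      nlinarith [hμd i]
    · simp only [hB, Matrix.add_apply, Matrix.smul_apply, Matrix.one_apply_ne hij, smul_eq_mul,
        mul_zero, add_zero]
      exact mul_nonneg hs.le (hoff i j hij)
  set ρ : ℝ := s * (μ - lam) with hρdef
  have hρ : 0 ≤ ρ := mul_nonneg hs.le (by linarith)
  have hBw : ∀ η, (B *ᵥ w) η ≤ ρ * w η := by
    intro η
    rw [hB, Matrix.add_mulVec, Matrix.smul_mulVec, Matrix.smul_mulVec,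
      Matrix.one_mulVec]
    simp only [Pi.add_apply, Pi.smul_apply, smul_eq_mul]
    have h1 := hGw η
    have h2 := hw0 η
    nlinarith
  -- powers bound
  have hpow : ∀ n : ℕ, (∀ η, 0 ≤ ((B ^ n) *ᵥ u) η) ∧ (∀ η, ((B ^ n) *ᵥ u) η ≤ ρ ^ n * w η) := by
    intro n
    induction n with
    | zero =>
      simp only [pow_zero, Matrix.one_mulVec]
      exact ⟨hu0, fun η => by simpa using huw η⟩
    | succ n ih =>
      have hrw : (B ^ (n + 1)) *ᵥ u = B *ᵥ ((B ^ n) *ᵥ u) := by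
        rw [Matrix.mulVec_mulVec, ← pow_succ']
      constructor
      · intro η
        rw [hrw]
        simp only [Matrix.mulVec, dotProduct]
        exact Finset.sum_nonneg fun k _ => mul_nonneg (hB0 η k) (ih.1 k)
      · intro η
        rw [hrw]
        simp only [Matrix.mulVec, dotProduct]
        calc ∑ k, B η k * ((B ^ n) *ᵥ u) k ≤ ∑ k, B η k * (ρ ^ n * w k) :=
              Finset.sum_le_sum fun k _ => mul_le_mul_of_nonneg_left (ih.2 k) (hB0 η k)
          _ = ρ ^ n * ∑ k, B η k * w k := by rw [Finset.mul_sum]; congr 1; ext k; ring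
          _ ≤ ρ ^ n * (ρ * w η) := by
              refine mul_le_mul_of_nonneg_left ?_ (pow_nonneg hρ n)
              exact hBw η
          _ = ρ ^ (n + 1) * w η := by ring
  -- exp split
  have hA : s • G = B + (-(s * μ)) • (1 : Matrix E E ℝ) := by
    rw [hB, neg_smul, add_assoc, add_neg_cancel, add_zero]
  have hcomm : Commute B ((-(s * μ)) • (1 : Matrix E E ℝ)) :=
    (Commute.one_right B).smul_right _
  have hexpc : ∑' n : ℕ, ((n.factorial : ℝ)⁻¹ * (-(s * μ)) ^ n) = Real.exp (-(s * μ)) := by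
    rw [Real.exp_eq_exp_ℝ, NormedSpace.exp_eq_tsum ℝ]
    simp [smul_eq_mul]
  have hsmul_one : ∀ i j : E, NormedSpace.exp ((-(s * μ)) • (1 : Matrix E E ℝ)) i j
      = if i = j then Real.exp (-(s * μ)) else 0 := by
    intro i j
    rw [exp_entry]
    have hp : ∀ n : ℕ, (((-(s * μ)) • (1 : Matrix E E ℝ)) ^ n) i j
        = (-(s * μ)) ^ n * (if i = j then (1:ℝ) else 0) := by
      intro n
      rw [smul_pow, one_pow, Matrix.smul_apply, smul_eq_mul, Matrix.one_apply]
    have hcong : ∀ n : ℕ, (n.factorial : ℝ)⁻¹ * (((-(s * μ)) • (1 : Matrix E E ℝ)) ^ n) i j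
        = (n.factorial : ℝ)⁻¹ * ((-(s * μ)) ^ n * if i = j then (1:ℝ) else 0) := fun n => by
      rw [hp n]
    rw [tsum_congr hcong]
    by_cases hij : i = j
    · simp only [hij, if_true, mul_one]
      exact hexpc
    · simp only [hij, if_false, mul_zero]
      simp
  have hsplit : ∀ i j, NormedSpace.exp (s • G) i j
      = Real.exp (-(s * μ)) * NormedSpace.exp B i j := by
    intro i j
    rw [hA, Matrix.exp_add_of_commute _ _ hcomm, Matrix.mul_apply]
    rw [Finset.sum_congr rfl fun k _ => by rw [hsmul_one k j]]
    simp [Finset.sum_ite_eq, mul_comm]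
  -- the sum over exp B
  set T : ℝ := ∑ η', NormedSpace.exp B ζ η' * u η' with hT
  have hscol : ∀ η', Summable fun n : ℕ => (n.factorial : ℝ)⁻¹ * (B ^ n) ζ η' * u η' := by
    intro η'
    simpa [mul_assoc] using (exp_entry_summable B ζ η').mul_right (u η')
  have hTsum : T = ∑' n : ℕ, ∑ η', (n.factorial : ℝ)⁻¹ * (B ^ n) ζ η' * u η' := by
    rw [hT]
    have : ∀ η', NormedSpace.exp B ζ η' * u η'
        = ∑' n : ℕ, (n.factorial : ℝ)⁻¹ * (B ^ n) ζ η' * u η' := by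
      intro η'
      rw [exp_entry]
      rw [← tsum_mul_right]
    rw [Finset.sum_congr rfl fun η' _ => this η']
    exact (Summable.tsum_finsetSum fun η' _ => hscol η').symm
  have hSn : ∀ n : ℕ, ∑ η', (n.factorial : ℝ)⁻¹ * (B ^ n) ζ η' * u η'
      = (n.factorial : ℝ)⁻¹ * ((B ^ n) *ᵥ u) ζ := by
    intro n
    simp only [Matrix.mulVec, dotProduct, Finset.mul_sum, mul_assoc]
  have hS0 : ∀ n : ℕ, 0 ≤ ∑ η', (n.factorial : ℝ)⁻¹ * (B ^ n) ζ η' * u η' := by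
    intro n
    rw [hSn]
    exact mul_nonneg (by positivity) ((hpow n).1 ζ)
  have hSle : ∀ n : ℕ, ∑ η', (n.factorial : ℝ)⁻¹ * (B ^ n) ζ η' * u η'
      ≤ ρ ^ n / (n.factorial : ℝ) * W := by
    intro n
    rw [hSn]
    have h1 : ((B ^ n) *ᵥ u) ζ ≤ ρ ^ n * w ζ := (hpow n).2 ζ
    have h2 : ρ ^ n * w ζ ≤ ρ ^ n * W := mul_le_mul_of_nonneg_left (hwW ζ) (pow_nonneg hρ n)
    have h3 : (0:ℝ) ≤ (n.factorial : ℝ)⁻¹ := by positivity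
    calc (n.factorial : ℝ)⁻¹ * ((B ^ n) *ᵥ u) ζ ≤ (n.factorial : ℝ)⁻¹ * (ρ ^ n * W) :=
          mul_le_mul_of_nonneg_left (h1.trans h2) h3
      _ = ρ ^ n / (n.factorial : ℝ) * W := by ring
  have hRHSsum : Summable fun n : ℕ => ρ ^ n / (n.factorial : ℝ) * W :=
    (Real.summable_pow_div_factorial ρ).mul_right W
  have hLHSsum : Summable fun n : ℕ => ∑ η', (n.factorial : ℝ)⁻¹ * (B ^ n) ζ η' * u η' :=
    Summable.of_nonneg_of_le hS0 hSle hRHSsum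
  have hT0 : 0 ≤ T := by
    rw [hTsum]; exact tsum_nonneg hS0
  have hTle : T ≤ Real.exp ρ * W := by
    rw [hTsum]
    calc ∑' n : ℕ, ∑ η', (n.factorial : ℝ)⁻¹ * (B ^ n) ζ η' * u η'
        ≤ ∑' n : ℕ, ρ ^ n / (n.factorial : ℝ) * W := Summable.tsum_le_tsum hSle hLHSsum hRHSsum
      _ = (∑' n : ℕ, ρ ^ n / (n.factorial : ℝ)) * W := tsum_mul_right
      _ = Real.exp ρ * W := by
          congr 1
          rw [Real.exp_eq_exp_ℝ, NormedSpace.exp_eq_tsum_div]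
  have htarget : ∑ η', NormedSpace.exp (s • G) ζ η' * u η' = Real.exp (-(s * μ)) * T := by
    rw [hT, Finset.mul_sum]
    exact Finset.sum_congr rfl fun η' _ => by rw [hsplit ζ η']; ring
  constructor
  · rw [htarget]
    exact mul_nonneg (Real.exp_nonneg _) hT0
  · rw [htarget]
    calc Real.exp (-(s * μ)) * T ≤ Real.exp (-(s * μ)) * (Real.exp ρ * W) :=
          mul_le_mul_of_nonneg_left hTle (Real.exp_nonneg _)
      _ = Real.exp (-(s * μ) + ρ) * W := by rw [Real.exp_add]; ring
      _ = Real.exp (-(s * lam)) * W := by rw [hρdef]; ring_nf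

/-- Let `G^D = r_D • Ψ + Γ + R_D` be generators (Q-matrices) of Markov
jump processes on a finite state space `E`, where `r_D → ∞`, `R_D → 0`, every state of
`Π ⊆ E` is absorbing for the dynamics generated by `Ψ`, from every state outside `Π` the
`Ψ`-jump rate is strictly positive, and every `Ψ`-jump from outside `Π` either enters `Π`
or strictly decreases a rank function `φ` (so at most boundedly many `Ψ`-jumps can occur
before absorption in `Π`).  Then the first hitting time `σ₁^D` of `Π` by the process
started at any `ζ ∈ E` converges to `0` in probability as `D → ∞`: writing `G̃^D` for the
generator modified so that all states of `Π` are absorbing, the probability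
`P_ζ[σ₁^D > s] = Σ_{η ∉ Π} exp(s G̃^D)_{ζ,η}` tends to `0` for every `s > 0`. -/
theorem hitting_time_tendsto_zero_in_probability
    {E : Type*} [Fintype E] [DecidableEq E] [Nonempty E]
    (Pi : Set E) [DecidablePred (· ∈ Pi)] (φ : E → ℕ)
    (r : ℕ → ℝ) (hr : Tendsto r atTop atTop)
    (Ψ Γ : Matrix E E ℝ) (R : ℕ → Matrix E E ℝ)
    (hR : ∀ η η', Tendsto (fun D => R D η η') atTop (nhds 0))
    (hΨoff : ∀ η η', η ≠ η' → 0 ≤ Ψ η η') (hΨrow : ∀ η, ∑ η', Ψ η η' = 0)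
    (hΓoff : ∀ η η', η ≠ η' → 0 ≤ Γ η η') (hΓrow : ∀ η, ∑ η', Γ η η' = 0)
    (habs : ∀ η ∈ Pi, ∀ η', Ψ η η' = 0)
    (hpos : ∀ η ∉ Pi, Ψ η η < 0)
    (hrank : ∀ η ∉ Pi, ∀ η', η ≠ η' → Ψ η η' ≠ 0 → η' ∈ Pi ∨ φ η' < φ η)
    (hGoff : ∀ D η η', η ≠ η' → 0 ≤ (r D • Ψ + Γ + R D) η η')
    (hGrow : ∀ D η, ∑ η', (r D • Ψ + Γ + R D) η η' = 0) :
    ∀ ζ : E, ∀ s : ℝ, 0 < s →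
      Tendsto
        (fun D =>
          ∑ η', if η' ∈ Pi then (0:ℝ) else
            (NormedSpace.exp
              (s • (Matrix.of fun η η' =>
                if η ∈ Pi then (0:ℝ) else (r D • Ψ + Γ + R D) η η'))) ζ η')
        atTop (nhds 0) := by
  intro ζ s hs
  classical
  set F : ℕ → ℝ := fun D =>
      ∑ η' : E, if η' ∈ Pi then (0:ℝ) else
        (NormedSpace.exp (s • (Matrix.of fun η η' =>
          if η ∈ Pi then (0:ℝ) else (r D • Ψ + Γ + R D) η η'))) ζ η' with hFdef
  by_cases hall : ∀ η : E, η ∈ Pi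
  · have hz : F = fun _ => 0 := by
      funext D
      exact Finset.sum_eq_zero fun η' _ => if_pos (hall η')
    rw [hz]
    exact tendsto_const_nhds
  push_neg at hall
  obtain ⟨η₀, hη₀⟩ := hall
  -- constants
  have hPc : (Finset.univ.filter (fun η : E => η ∉ Pi)).Nonempty :=
    ⟨η₀, by simp [hη₀]⟩
  set c : ℝ := (Finset.univ.filter (fun η : E => η ∉ Pi)).inf' hPc (fun η => -Ψ η η) with hcdef
  have hc0 : 0 < c := by
    rw [hcdef, Finset.lt_inf'_iff]
    intro η hη
    rw [Finset.mem_filter] at hη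
    linarith [hpos η hη.2]
  have hcle : ∀ η, η ∉ Pi → c ≤ -Ψ η η := fun η hη =>
    Finset.inf'_le (fun η => -Ψ η η)
      (by rw [Finset.mem_filter]; exact ⟨Finset.mem_univ η, hη⟩)
  set w : E → ℝ := fun η => if η ∈ Pi then 0 else (2:ℝ) ^ (φ η) with hwdef
  set u : E → ℝ := fun η => if η ∈ Pi then 0 else 1 with hudef
  set W : ℝ := (2:ℝ) ^ (Finset.univ.sup φ) with hWdef
  have hW0 : (0:ℝ) ≤ W := by positivity
  have hw0 : ∀ η, 0 ≤ w η := by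
    intro η
    by_cases hη : η ∈ Pi <;> simp only [hwdef, hη, if_true, if_false] <;> positivity
  have hw1 : ∀ η, η ∉ Pi → 1 ≤ w η := by
    intro η hη
    simp only [hwdef, hη, if_false]
    exact one_le_pow₀ (by norm_num)
  have hwW : ∀ η, w η ≤ W := by
    intro η
    by_cases hη : η ∈ Pi
    · simp only [hwdef, hη, if_true]; exact hW0
    · simp only [hwdef, hη, if_false, hWdef]
      exact pow_le_pow_right₀ (by norm_num) (Finset.le_sup (Finset.mem_univ η))
  have hu0 : ∀ η, 0 ≤ u η := by
    intro η
    by_cases hη : η ∈ Pi <;> simp [hudef, hη]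
  have huw : ∀ η, u η ≤ w η := by
    intro η
    by_cases hη : η ∈ Pi
    · simp [hudef, hwdef, hη]
    · simp only [hudef, hwdef, hη, if_false]
      exact one_le_pow₀ (by norm_num)
  set Γb : ℝ := ∑ η : E, ∑ η' : E, |Γ η η'| with hΓbdef
  set g : ℕ → ℝ := fun D => ∑ η : E, ∑ η' : E, |R D η η'| with hgdef
  have hrowΓ : ∀ η : E, ∑ η' : E, |Γ η η'| ≤ Γb := by
    intro η
    rw [hΓbdef]
    exact Finset.single_le_sum (f := fun η : E => ∑ η' : E, |Γ η η'|)
      (fun k _ => Finset.sum_nonneg fun j _ => abs_nonneg _) (Finset.mem_univ η)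
  have hrowR : ∀ D (η : E), ∑ η' : E, |R D η η'| ≤ g D := by
    intro D η
    exact Finset.single_le_sum (f := fun η : E => ∑ η' : E, |R D η η'|)
      (fun k _ => Finset.sum_nonneg fun j _ => abs_nonneg _) (Finset.mem_univ η)
  have hg0 : ∀ D, 0 ≤ g D := fun D =>
    Finset.sum_nonneg fun i _ => Finset.sum_nonneg fun j _ => abs_nonneg _
  have hΓb0 : 0 ≤ Γb := Finset.sum_nonneg fun i _ => Finset.sum_nonneg fun j _ => abs_nonneg _
  have hgtend : Tendsto g atTop (nhds 0) := by
    have h1 : Tendsto g atTop (nhds (∑ η : E, ∑ η' : E, (0:ℝ))) := by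
      refine tendsto_finset_sum _ fun η _ => ?_
      refine tendsto_finset_sum _ fun η' _ => ?_
      have := (hR η η').abs
      rwa [abs_zero] at this
    simpa using h1
  set K : ℕ → ℝ := fun D => W * (Γb + g D) with hKdef
  have hK0 : ∀ D, 0 ≤ K D := fun D => mul_nonneg hW0 (by linarith [hg0 D, hΓb0])
  set lam : ℕ → ℝ := fun D => r D * (c / 2) - K D with hlamdef
  -- per-D bounds
  have hGD : ∀ D : ℕ, 0 ≤ r D → 0 ≤ F D ∧ F D ≤ Real.exp (-(s * lam D)) * W := by
    intro D hrD
    set G : Matrix E E ℝ := Matrix.of fun η η' =>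
      if η ∈ Pi then (0:ℝ) else (r D • Ψ + Γ + R D) η η' with hGdef
    have hGa : ∀ η η' : E, G η η' = if η ∈ Pi then (0:ℝ) else (r D • Ψ + Γ + R D) η η' :=
      fun η η' => rfl
    have hoff : ∀ η η', η ≠ η' → 0 ≤ G η η' := by
      intro η η' hne
      rw [hGa]
      split
      · exact le_refl 0
      · exact hGoff D η η' hne
    have hGw : ∀ η, (G *ᵥ w) η ≤ -(lam D) * w η := by
      intro η
      by_cases hη : η ∈ Pi
      · have h1 : (G *ᵥ w) η = 0 := by
          simp only [Matrix.mulVec, dotProduct]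
          refine Finset.sum_eq_zero fun k _ => ?_
          rw [hGa, if_pos hη, zero_mul]
        have h2 : w η = 0 := by rw [hwdef]; exact if_pos hη
        rw [h1, h2, mul_zero]
      · have hwη : w η = (2:ℝ) ^ (φ η) := by rw [hwdef]; exact if_neg hη
        have hwηpos : 0 < w η := by rw [hwη]; positivity
        have hG2 : ∀ k, G η k = r D * Ψ η k + (Γ η k + R D η k) := by
          intro k
          rw [hGa, if_neg hη]
          simp [Matrix.add_apply, Matrix.smul_apply, smul_eq_mul]
          ring
        have hsplit : (G *ᵥ w) η
            = r D * (∑ k, Ψ η k * w k) + ∑ k, (Γ η k + R D η k) * w k := by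
          simp only [Matrix.mulVec, dotProduct]
          rw [Finset.mul_sum, ← Finset.sum_add_distrib]
          refine Finset.sum_congr rfl fun k _ => ?_
          rw [hG2]
          ring
        -- Ψ part
        have hPsi : ∑ k, Ψ η k * w k ≤ -(c / 2) * w η := by
          have herase : ∑ k, Ψ η k * w k
              = Ψ η η * w η + ∑ k ∈ Finset.univ.erase η, Ψ η k * w k :=
            (Finset.add_sum_erase _ _ (Finset.mem_univ η)).symm
          have hrowe : Ψ η η + ∑ k ∈ Finset.univ.erase η, Ψ η k = 0 := by
            rw [Finset.add_sum_erase _ _ (Finset.mem_univ η)]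
            exact hΨrow η
          have hterm : ∀ k ∈ Finset.univ.erase η, Ψ η k * w k ≤ Ψ η k * (w η / 2) := by
            intro k hk
            have hkη : k ≠ η := Finset.ne_of_mem_erase hk
            by_cases hz : Ψ η k = 0
            · rw [hz, zero_mul, zero_mul]
            · have hΨpos : 0 ≤ Ψ η k := hΨoff η k (Ne.symm hkη)
              refine mul_le_mul_of_nonneg_left ?_ hΨpos
              by_cases hkin : k ∈ Pi
              · have hwk : w k = 0 := by rw [hwdef]; exact if_pos hkin
                rw [hwk]
                linarith
              · have hlt : φ k < φ η := by
                  rcases hrank η hη k (Ne.symm hkη) hz with hin | hlt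
                  · exact absurd hin hkin
                  · exact hlt
                have hwk : w k = (2:ℝ) ^ (φ k) := by rw [hwdef]; exact if_neg hkin
                have hp : (2:ℝ) ^ (φ k + 1) ≤ (2:ℝ) ^ (φ η) :=
                  pow_le_pow_right₀ (by norm_num) (Nat.succ_le_of_lt hlt)
                rw [pow_succ] at hp
                rw [hwk, hwη]
                linarith
          have hsum : ∑ k ∈ Finset.univ.erase η, Ψ η k * w k
              ≤ (∑ k ∈ Finset.univ.erase η, Ψ η k) * (w η / 2) := by
            rw [Finset.sum_mul]
            exact Finset.sum_le_sum hterm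
          have hΨd : Ψ η η ≤ -c := by linarith [hcle η hη]
          have hse : ∑ k ∈ Finset.univ.erase η, Ψ η k = -Ψ η η := by linarith
          rw [herase]
          rw [hse] at hsum
          nlinarith [hwηpos.le]
        -- Γ + R part
        have hGR : ∑ k, (Γ η k + R D η k) * w k ≤ K D := by
          have hterm : ∀ k : E, (Γ η k + R D η k) * w k ≤ (|Γ η k| + |R D η k|) * W := by
            intro k
            have h1 : (Γ η k + R D η k) * w k ≤ |Γ η k + R D η k| * w k :=
              mul_le_mul_of_nonneg_right (le_abs_self _) (hw0 k)
            have h2 : |Γ η k + R D η k| * w k ≤ (|Γ η k| + |R D η k|) * w k :=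
              mul_le_mul_of_nonneg_right (abs_add_le _ _) (hw0 k)
            have h3 : (|Γ η k| + |R D η k|) * w k ≤ (|Γ η k| + |R D η k|) * W :=
              mul_le_mul_of_nonneg_left (hwW k) (by positivity)
            linarith
          calc ∑ k, (Γ η k + R D η k) * w k ≤ ∑ k, (|Γ η k| + |R D η k|) * W :=
                Finset.sum_le_sum fun k _ => hterm k
            _ = (∑ k, |Γ η k| + ∑ k, |R D η k|) * W := by
                rw [← Finset.sum_add_distrib, Finset.sum_mul]
            _ ≤ (Γb + g D) * W := by
                have := hrowΓ η
                have := hrowR D η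
                nlinarith
            _ = K D := by rw [hKdef]; ring
        -- combine
        rw [hsplit]
        have h1 : r D * (∑ k, Ψ η k * w k) ≤ r D * (-(c / 2) * w η) :=
          mul_le_mul_of_nonneg_left hPsi hrD
        have h2 : K D ≤ K D * w η := by
          nlinarith [hK0 D, hw1 η hη]
        have : -(lam D) * w η = -(r D * (c / 2)) * w η + K D * w η := by
          rw [hlamdef]; ring
        rw [this]
        have h3 : r D * (-(c / 2) * w η) = -(r D * (c / 2)) * w η := by ring
        linarith [hGR]
    -- apply the core bound
    obtain ⟨h1, h2⟩ := core_bound G u w W hu0 huw hw0 hwW hoff (lam D) hGw s hs ζ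
    have hFeq : F D = ∑ η' : E, NormedSpace.exp (s • G) ζ η' * u η' := by
      show (∑ η' : E, if η' ∈ Pi then (0:ℝ) else NormedSpace.exp (s • G) ζ η') = _
      refine Finset.sum_congr rfl fun η' _ => ?_
      by_cases hη' : η' ∈ Pi
      · rw [if_pos hη', hudef]
        simp [hη']
      · rw [if_neg hη', hudef]
        simp [hη']
    rw [hFeq]
    exact ⟨h1, h2⟩
  -- the vanishing upper bound
  have hbound : Tendsto (fun D => Real.exp (-(s * lam D)) * W) atTop (nhds 0) := by
    have hlamtop : Tendsto lam atTop atTop := by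
      have h1 : Tendsto (fun D => r D * (c / 2) + -(W * (Γb + 1))) atTop atTop :=
        tendsto_atTop_add_const_right _ _ (hr.atTop_mul_const (by positivity))
      refine tendsto_atTop_mono' atTop ?_ h1
      filter_upwards [hgtend.eventually_lt_const (by norm_num : (0:ℝ) < 1)] with D hD
      have hKd : K D ≤ W * (Γb + 1) := by
        show W * (Γb + g D) ≤ W * (Γb + 1)
        have h' : Γb + g D ≤ Γb + 1 := by linarith
        exact mul_le_mul_of_nonneg_left h' hW0
      show r D * (c / 2) + -(W * (Γb + 1)) ≤ r D * (c / 2) - K D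
      linarith
    have h2 : Tendsto (fun D => -(s * lam D)) atTop atBot := by
      have hs2 : Tendsto (fun D => s * lam D) atTop atTop := hlamtop.const_mul_atTop hs
      exact tendsto_neg_atTop_atBot.comp hs2
    have h3 : Tendsto (fun D => Real.exp (-(s * lam D))) atTop (nhds 0) :=
      Real.tendsto_exp_atBot.comp h2
    have h4 := h3.mul_const W
    simpa using h4
  refine tendsto_of_tendsto_of_tendsto_of_le_of_le' tendsto_const_nhds hbound ?_ ?_
  · filter_upwards [hr.eventually_ge_atTop 0] with D hD
    exact (hGD D hD).1
  · filter_upwards [hr.eventually_ge_atTop 0] with D hD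
    exact (hGD D hD).2
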